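/- Let R be a reduced ring and let M_R be an (σ,δ)-compatible module satisfying condition (*). Then M_R is (σ,δ)-skew McCoy. -/

import Mathlib

open MulOpposite

/-- `fw σ δ i j` is `f_i^j`, the sum of all words in `σ`, `δ` built with `i` factors of `σ`
and `j - i` factors of `δ`. -/
def fw {R : Type*} [Ring R] (σ δ : R → R) : ℕ → ℕ → R → R
  | 0, 0 => id
  | _ + 1, 0 => fun _ => 0
  | 0, j + 1 => fun a => δ (fw σ δ 0 j a)
  | i + 1, j + 1 => fun a => σ (fw σ δ i j a) + δ (fw σ δ (i + 1) j a)

/-- Multiplication of the Ore extension `R[x;σ,δ]`, on coefficient sequences. -/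
noncomputable def skewMul {R : Type*} [Ring R] (σ δ : R → R) (p q : ℕ →₀ R) : ℕ →₀ R :=
  p.sum fun j a => q.sum fun l b =>
    ∑ i ∈ Finset.range (j + 1), Finsupp.single (i + l) (a * fw σ δ i j b)

/-- The action of `R[x;σ,δ]` on the skew polynomial module `M[x;σ,δ]`, where `M` is a
right `R`-module (a module over `Rᵐᵒᵖ`): `(m x^j)·(b x^l) = Σ_{i≤j} (m·f_i^j(b)) x^{i+l}`. -/
noncomputable def skewSMul {R : Type*} [Ring R] (σ δ : R → R) {M : Type*} [AddCommGroup M]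
    [Module Rᵐᵒᵖ M] (m : ℕ →₀ M) (q : ℕ →₀ R) : ℕ →₀ M :=
  m.sum fun j mm => q.sum fun l b =>
    ∑ i ∈ Finset.range (j + 1), Finsupp.single (i + l) (op (fw σ δ i j b) • mm)

/-- A right `R`-module `M` is `(σ,δ)`-skew McCoy if whenever `m(x) g(x) = 0` in `M[x;σ,δ]`
with `g(x) ≠ 0`, there is a nonzero `a ∈ R` with `m(x) a = 0`. -/
def IsSkewMcCoy {R : Type*} [Ring R] (σ δ : R → R) (M : Type*) [AddCommGroup M]
    [Module Rᵐᵒᵖ M] : Prop :=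
  ∀ (m : ℕ →₀ M) (g : ℕ →₀ R), g ≠ 0 → skewSMul σ δ m g = 0 →
    ∃ a : R, a ≠ 0 ∧ skewSMul σ δ m (Finsupp.single 0 a) = 0

/-- A right `R`-module `M` is `(σ,δ)`-skew Armendariz if `m(x) g(x) = 0` implies
`(m_i x^i)(b_j x^j) = 0` for all `i, j`. -/
def IsSkewArmendariz {R : Type*} [Ring R] (σ δ : R → R) (M : Type*) [AddCommGroup M]
    [Module Rᵐᵒᵖ M] : Prop :=
  ∀ (m : ℕ →₀ M) (g : ℕ →₀ R), skewSMul σ δ m g = 0 →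
    ∀ i j, skewSMul σ δ (Finsupp.single i (m i)) (Finsupp.single j (g j)) = 0

/-- `σ`-compatibility of a right module: `m a = 0 ↔ m σ(a) = 0`. -/
def SigmaCompatible {R : Type*} [Ring R] (σ : R → R) (M : Type*) [AddCommGroup M]
    [Module Rᵐᵒᵖ M] : Prop :=
  ∀ (m : M) (a : R), op a • m = 0 ↔ op (σ a) • m = 0

/-- `δ`-compatibility of a right module: `m a = 0 → m δ(a) = 0`. -/
def DeltaCompatible {R : Type*} [Ring R] (δ : R → R) (M : Type*) [AddCommGroup M]
    [Module Rᵐᵒᵖ M] : Prop :=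
  ∀ (m : M) (a : R), op a • m = 0 → op (δ a) • m = 0

/-- A right module `M` is reduced if `m a = 0` implies `mR ∩ Ma = 0`. -/
def IsReducedModule {R : Type*} [Ring R] (M : Type*) [AddCommGroup M]
    [Module Rᵐᵒᵖ M] : Prop :=
  ∀ (m : M) (a : R), op a • m = 0 →
    ∀ x : M, (∃ r : R, op r • m = x) → (∃ m' : M, op a • m' = x) → x = 0

/-- Condition `(*)`: `m(x) f(x) = 0` implies `m(x) R f(x) = 0`. -/
def StarCondition {R : Type*} [Ring R] (σ δ : R → R) (M : Type*) [AddCommGroup M]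
    [Module Rᵐᵒᵖ M] : Prop :=
  ∀ (m : ℕ →₀ M) (f : ℕ →₀ R), skewSMul σ δ m f = 0 →
    ∀ r : R, skewSMul σ δ m (skewMul σ δ (Finsupp.single 0 r) f) = 0

section SkewMcCoyHelpers

variable {R : Type*} [Ring R] {M : Type*} [AddCommGroup M] [Module Rᵐᵒᵖ M]

private lemma fw00 (σf δ : R → R) (a : R) : fw σf δ 0 0 a = a := rfl

private lemma fwS0 (σf δ : R → R) (i : ℕ) (a : R) : fw σf δ (i + 1) 0 a = 0 := rfl

private lemma fw0S (σf δ : R → R) (j : ℕ) (a : R) :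
    fw σf δ 0 (j + 1) a = δ (fw σf δ 0 j a) := rfl

private lemma fwSS (σf δ : R → R) (i j : ℕ) (a : R) :
    fw σf δ (i + 1) (j + 1) a = σf (fw σf δ i j a) + δ (fw σf δ (i + 1) j a) := rfl

private lemma fw_zero_arg (σf δ : R → R) (hσ0 : σf 0 = 0) (hδ0 : δ 0 = 0) :
    ∀ j i, fw σf δ i j (0 : R) = 0 := by
  intro j
  induction j with
  | zero =>
    intro i
    cases i with
    | zero => rfl
    | succ i => rfl
  | succ j ih =>
    intro i
    cases i with
    | zero => rw [fw0S, ih 0, hδ0]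
    | succ i => rw [fwSS, ih i, ih (i + 1), hσ0, hδ0, add_zero]

private lemma fw_gt (σf δ : R → R) (hσ0 : σf 0 = 0) (hδ0 : δ 0 = 0) :
    ∀ j i (a : R), j < i → fw σf δ i j a = 0 := by
  intro j
  induction j with
  | zero =>
    intro i a hi
    cases i with
    | zero => omega
    | succ i => rfl
  | succ j ih =>
    intro i a hi
    cases i with
    | zero => omega
    | succ i =>
      rw [fwSS, ih i a (by omega), ih (i + 1) a (by omega), hσ0, hδ0, add_zero]

private lemma fw_diag (σf δ : R → R) (hσ0 : σf 0 = 0) (hδ0 : δ 0 = 0) :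
    ∀ (k : ℕ) (a : R), fw σf δ k k a = σf^[k] a := by
  intro k
  induction k with
  | zero => intro a; rfl
  | succ k ih =>
    intro a
    rw [fwSS, ih a, fw_gt σf δ hσ0 hδ0 k (k + 1) a (Nat.lt_succ_self k), hδ0, add_zero,
      Function.iterate_succ_apply']

private lemma ann_rmul {a : R} {x : M} (h : op a • x = 0) (s : R) : op (a * s) • x = 0 := by
  rw [MulOpposite.op_mul, mul_smul, h, smul_zero]

private lemma ann_fw {σf δ : R → R} (hσ : SigmaCompatible σf M) (hδc : DeltaCompatible δ M)
    {a : R} {x : M} (h : op a • x = 0) : ∀ j i, op (fw σf δ i j a) • x = 0 := by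
  intro j
  induction j with
  | zero =>
    intro i
    cases i with
    | zero => rw [fw00]; exact h
    | succ i => rw [fwS0, MulOpposite.op_zero, zero_smul]
  | succ j ih =>
    intro i
    cases i with
    | zero => rw [fw0S]; exact hδc x _ (ih 0)
    | succ i =>
      rw [fwSS, MulOpposite.op_add, add_smul, (hσ x _).mp (ih i), hδc x _ (ih (i + 1)), add_zero]

private lemma ann_strip {σf : R → R} (hσ : SigmaCompatible σf M) :
    ∀ (k : ℕ) (a : R) (x : M), op (σf^[k] a) • x = 0 → op a • x = 0 := by
  intro k
  induction k with
  | zero => intro a x h; exact h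
  | succ k ih =>
    intro a x h
    rw [Function.iterate_succ_apply] at h
    exact (hσ x a).mpr (ih (σf a) x h)

private lemma skewMul_single_zero_apply (σf δ : R → R) (r : R) (g : ℕ →₀ R) (l : ℕ) :
    skewMul σf δ (Finsupp.single 0 r) g l = r * g l := by
  classical
  rw [skewMul, Finsupp.sum_single_index (by simp)]
  rw [Finsupp.sum_apply]
  have h1 : (g.sum fun l' b =>
      (∑ i ∈ Finset.range (0 + 1), Finsupp.single (i + l') (r * fw σf δ i 0 b)) l)
      = g.sum fun l' b => if l' = l then r * b else 0 := by
    apply Finsupp.sum_congr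
    intro l' _
    rw [zero_add, Finset.sum_range_one, zero_add, fw00, Finsupp.single_apply]
  rw [h1, Finsupp.sum, Finset.sum_ite_eq']
  split_ifs with hmem
  · rfl
  · rw [Finsupp.notMem_support_iff.mp hmem, mul_zero]

private lemma skewSMul_apply (σf δ : R → R) (m : ℕ →₀ M) (h : ℕ →₀ R) (n : ℕ) :
    skewSMul σf δ m h n
      = m.sum fun j mm => h.sum fun l c =>
          ∑ i ∈ Finset.range (j + 1), if i + l = n then op (fw σf δ i j c) • mm else 0 := by
  classical
  rw [skewSMul, Finsupp.sum_apply]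
  apply Finsupp.sum_congr
  intro j _
  rw [Finsupp.sum_apply]
  apply Finsupp.sum_congr
  intro l _
  rw [Finset.sum_apply']
  apply Finset.sum_congr rfl
  intro i _
  rw [Finsupp.single_apply]

end SkewMcCoyHelpers

/-- Let `M_R` be an `(σ,δ)`-compatible module over a reduced ring `R`. If `M_R` satisfies
condition `(*)`, then it is `(σ,δ)`-skew McCoy. -/
theorem compatible_star_isSkewMcCoy {R : Type*} [Ring R] [IsReduced R]
    (σ : R →+* R) (δ : R → R)
    (hδadd : ∀ a b : R, δ (a + b) = δ a + δ b)
    (hδmul : ∀ a b : R, δ (a * b) = σ a * δ b + δ a * b)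
    (M : Type*) [AddCommGroup M] [Module Rᵐᵒᵖ M]
    (hσ : SigmaCompatible ⇑σ M) (hδc : DeltaCompatible δ M)
    (hstar : StarCondition ⇑σ δ M) :
    IsSkewMcCoy ⇑σ δ M := by
  classical
  intro m g hgne hmg
  have hσ0 : (⇑σ) (0 : R) = 0 := map_zero σ
  have hδ0 : δ 0 = 0 := by
    have h := hδadd 0 0
    rw [add_zero] at h
    exact (left_eq_add.mp h)
  have hgs : g.support.Nonempty := Finsupp.support_nonempty_iff.mpr hgne
  set p := g.support.max' hgs with hp
  have hbne : g p ≠ 0 := Finsupp.mem_support_iff.mp (g.support.max'_mem hgs)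
  have hgle : ∀ l, g l ≠ 0 → l ≤ p :=
    fun l hl => Finset.le_max' _ l (Finsupp.mem_support_iff.mpr hl)
  by_cases hm0 : m = 0
  · refine ⟨g p, hbne, ?_⟩
    rw [hm0, skewSMul, Finsupp.sum_zero_index]
  have hms : m.support.Nonempty := Finsupp.support_nonempty_iff.mpr hm0
  set q := m.support.max' hms with hq
  have hmgt : ∀ j, q < j → m j = 0 := by
    intro j hj
    by_contra hne
    exact absurd (Finset.le_max' _ j (Finsupp.mem_support_iff.mpr hne)) (not_le.mpr hj)
  -- the key step extracted from the coefficient of `m ⬝ (r·g)` in degree `j + p`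
  have step : ∀ (j : ℕ) (r : R),
      (∀ j' l, j < j' → op (r * g l) • m j' = 0) → op (r * g p) • m j = 0 := by
    intro j r htail
    by_cases hjm : j ∈ m.support
    swap
    · rw [Finsupp.notMem_support_iff.mp hjm, smul_zero]
    · set w := skewMul ⇑σ δ (Finsupp.single 0 r) g with hw_def
      have hw : ∀ l, w l = r * g l := fun l => skewMul_single_zero_apply ⇑σ δ r g l
      have hwsupp : ∀ l, w l ≠ 0 → l ≤ p := by
        intro l hl
        apply hgle
        intro h0
        exact hl (by rw [hw l, h0, mul_zero])
      have H0 : skewSMul ⇑σ δ m w = 0 := hstar m g hmg r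
      have Hn : skewSMul ⇑σ δ m w (j + p) = 0 := by rw [H0]; rfl
      rw [skewSMul_apply] at Hn
      have hmain : (m.sum fun j' mm => w.sum fun l c =>
          ∑ i ∈ Finset.range (j' + 1),
            if i + l = j + p then op (fw ⇑σ δ i j' c) • mm else 0)
          = op (fw ⇑σ δ j j (w p)) • m j := by
        rw [Finsupp.sum]
        refine Eq.trans (Finset.sum_eq_single_of_mem j hjm ?_) ?_
        · -- other indices j' contribute 0
          intro j' _ hne
          rw [Finsupp.sum]
          apply Finset.sum_eq_zero
          intro l hl
          apply Finset.sum_eq_zero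
          intro i hi
          have hir := Finset.mem_range.mp hi
          have hlp : l ≤ p := hwsupp l (Finsupp.mem_support_iff.mp hl)
          rcases lt_or_gt_of_ne hne with hlt | hgt
          · exact if_neg (by omega)
          · split_ifs with hc
            · have h1 : op (w l) • m j' = 0 := by
                rw [hw l]; exact htail j' l hgt
              exact ann_fw hσ hδc h1 j' i
            · rfl
        · -- the term at j' = j
          rw [Finsupp.sum]
          by_cases hpw : p ∈ w.support
          · refine Eq.trans (Finset.sum_eq_single_of_mem p hpw ?_) ?_
            · intro l hl hne
              apply Finset.sum_eq_zero
              intro i hi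
              have hir := Finset.mem_range.mp hi
              have hlp : l ≤ p := hwsupp l (Finsupp.mem_support_iff.mp hl)
              exact if_neg (by omega)
            · have hcond : ∀ i : ℕ, (i + p = j + p) = (i = j) := by
                intro i; apply propext; omega
              simp only [hcond]
              rw [Finset.sum_ite_eq' (Finset.range (j + 1)) j
                (fun i => op (fw ⇑σ δ i j (w p)) • m j)]
              rw [if_pos (Finset.self_mem_range_succ j)]
          · rw [Finsupp.notMem_support_iff.mp hpw, fw_zero_arg ⇑σ δ hσ0 hδ0,
              MulOpposite.op_zero, zero_smul]
            apply Finset.sum_eq_zero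
            intro l hl
            apply Finset.sum_eq_zero
            intro i hi
            have hir := Finset.mem_range.mp hi
            have hlp : l ≤ p := hwsupp l (Finsupp.mem_support_iff.mp hl)
            have hlnp : l ≠ p := fun e => hpw (e ▸ hl)
            exact if_neg (by omega)
      rw [hmain] at Hn
      rw [fw_diag ⇑σ δ hσ0 hδ0] at Hn
      have h2 := ann_strip hσ j (w p) (m j) Hn
      rwa [hw p] at h2
  -- downward induction: `m j` is annihilated by `R · (g p)^(q - j + 1)`
  have main : ∀ t, ∀ j, q ≤ j + t → ∀ r : R, op (r * g p ^ (q - j + 1)) • m j = 0 := by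
    intro t
    induction t with
    | zero =>
      intro j hj r
      have hj' : q ≤ j := by omega
      rcases eq_or_lt_of_le hj' with heq | hlt
      · have h1 : q - j + 1 = 1 := by omega
        rw [h1, pow_one]
        apply step j r
        intro j' l hlt'
        rw [hmgt j' (by omega), smul_zero]
      · rw [hmgt j hlt, smul_zero]
    | succ t ih =>
      intro j hj r
      by_cases h1 : q ≤ j + t
      · exact ih j h1 r
      · have hjt : j + t + 1 = q := by omega
        have hstep := step j (r * g p ^ (t + 1)) ?_
        · have h2 : q - j + 1 = t + 2 := by omega
          rw [h2]
          have h3 : r * g p ^ (t + 2) = r * g p ^ (t + 1) * g p := by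
            rw [mul_assoc, ← pow_succ]
          rw [h3]
          exact hstep
        · intro j' l hlt
          by_cases h4 : q < j'
          · rw [hmgt j' h4, smul_zero]
          · have h5 : q ≤ j' + t := by omega
            have h6 := ih j' h5 (r * g p ^ (t + 1 - (q - j' + 1)))
            have h7 := ann_rmul h6 (g l)
            have h8 : r * g p ^ (t + 1 - (q - j' + 1)) * g p ^ (q - j' + 1)
                = r * g p ^ (t + 1) := by
              rw [mul_assoc, ← pow_add]
              congr 2
              omega
            rwa [h8] at h7
  have final : ∀ j, op (g p ^ (q + 1)) • m j = 0 := by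
    intro j
    by_cases hjq : q < j
    · rw [hmgt j hjq, smul_zero]
    · have h1 := main q j (by omega) (g p ^ j)
      have h2 : g p ^ j * g p ^ (q - j + 1) = g p ^ (q + 1) := by
        rw [← pow_add]
        congr 1
        omega
      rwa [h2] at h1
  refine ⟨g p ^ (q + 1), fun h0 => hbne (IsNilpotent.eq_zero ⟨q + 1, h0⟩), ?_⟩
  rw [skewSMul, Finsupp.sum]
  apply Finset.sum_eq_zero
  intro j _
  rw [Finsupp.sum_single_index]
  · apply Finset.sum_eq_zero
    intro i _
    rw [ann_fw hσ hδc (final j) j i, Finsupp.single_zero]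
  · apply Finset.sum_eq_zero
    intro i _
    rw [fw_zero_arg ⇑σ δ hσ0 hδ0, MulOpposite.op_zero, zero_smul, Finsupp.single_zero]
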